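/- (Erdős–Simonovits supersaturation for triangles.) For every γ > 0 there exists δ > 0 such that every graph on n vertices with at least (1/4 + γ) n^2 edges contains at least δ n^3 triangles, i.e., at least δ n^3 three-element vertex subsets that are pairwise adjacent. -/

import Mathlib

open Finset

/-- Mantel's theorem: a triangle-free graph has at most `n²/4` edges. -/
lemma mantel_real {V : Type*} [Fintype V] {H : SimpleGraph V} [DecidableRel H.Adj]
    (h : H.CliqueFree 3) :
    (#H.edgeFinset : ℝ) ≤ (Fintype.card V : ℝ) ^ 2 / 4 := by
  classical
  set n : ℕ := Fintype.card V with hn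
  -- For every edge, the sum of the endpoint degrees is at most `n`.
  have key : ∀ u v : V, H.Adj u v → H.degree u + H.degree v ≤ n := by
    intro u v huv
    have hdisj : Disjoint (H.neighborFinset u) (H.neighborFinset v) := by
      rw [Finset.disjoint_left]
      intro w hwu hwv
      rw [SimpleGraph.mem_neighborFinset] at hwu hwv
      exact h {u, v, w} (SimpleGraph.is3Clique_triple_iff.2 ⟨huv, hwu, hwv⟩)
    calc H.degree u + H.degree v
        = #(H.neighborFinset u) + #(H.neighborFinset v) := by
          simp [SimpleGraph.card_neighborFinset_eq_degree]
      _ = #(H.neighborFinset u ∪ H.neighborFinset v) :=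
          (Finset.card_union_of_disjoint hdisj).symm
      _ ≤ #(Finset.univ : Finset V) := Finset.card_le_card (Finset.subset_univ _)
      _ = n := Finset.card_univ
  set S : ℝ := ∑ v : V, (H.degree v : ℝ) ^ 2 with hS
  set m : ℕ := #H.edgeFinset with hm
  have hsumdeg : ∑ v : V, (H.degree v : ℝ) = 2 * m := by
    rw [← Nat.cast_sum]
    norm_cast
    exact H.sum_degrees_eq_twice_card_edges
  -- swap the double sum
  have hswap : ∑ v : V, ∑ u ∈ H.neighborFinset v, (H.degree u : ℝ) = S := by
    rw [Finset.sum_comm' (s := Finset.univ) (t := fun v => H.neighborFinset v)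
      (t' := Finset.univ) (s' := fun u => H.neighborFinset u)
      (by
        intro x y
        simp [SimpleGraph.mem_neighborFinset, SimpleGraph.adj_comm])]
    simp [hS, Finset.sum_const, SimpleGraph.card_neighborFinset_eq_degree, sq, mul_comm]
  -- S ≤ n * (2m) - S
  have hS_le : 2 * S ≤ (n : ℝ) * (2 * m) := by
    have h1 : S = ∑ v : V, ∑ _u ∈ H.neighborFinset v, (H.degree v : ℝ) := by
      simp [hS, Finset.sum_const, SimpleGraph.card_neighborFinset_eq_degree, sq, mul_comm]
    have h2 : ∑ v : V, ∑ u ∈ H.neighborFinset v, (H.degree v : ℝ)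
        ≤ ∑ v : V, ∑ u ∈ H.neighborFinset v, ((n : ℝ) - H.degree u) := by
      apply Finset.sum_le_sum
      intro v _
      apply Finset.sum_le_sum
      intro u hu
      rw [SimpleGraph.mem_neighborFinset] at hu
      have := key v u hu
      have : (H.degree v : ℝ) + H.degree u ≤ n := by exact_mod_cast this
      linarith
    have h3 : ∑ v : V, ∑ u ∈ H.neighborFinset v, ((n : ℝ) - H.degree u)
        = (n : ℝ) * (2 * m) - S := by
      rw [Finset.sum_congr rfl (fun v _ => Finset.sum_sub_distrib _ _)]
      rw [Finset.sum_sub_distrib, hswap]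
      congr 1
      have : ∀ v : V, ∑ _u ∈ H.neighborFinset v, (n : ℝ) = (H.degree v : ℝ) * n := by
        intro v
        simp [Finset.sum_const, SimpleGraph.card_neighborFinset_eq_degree, mul_comm]
      rw [Finset.sum_congr rfl (fun v _ => this v)]
      rw [← Finset.sum_mul, hsumdeg]
      ring
    have := h1 ▸ (h2.trans h3.le)
    linarith
  -- Cauchy-Schwarz
  have hCS : (∑ v : V, (H.degree v : ℝ)) ^ 2 ≤ (n : ℝ) * S := by
    have := sq_sum_le_card_mul_sum_sq (s := (Finset.univ : Finset V))
      (f := fun v => (H.degree v : ℝ))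
    simpa [hn, hS] using this
  rw [hsumdeg] at hCS
  have hm0 : (0 : ℝ) ≤ m := Nat.cast_nonneg m
  nlinarith [hCS, hS_le, sq_nonneg ((n : ℝ) - 2 * m)]

/-- The number of triangles of `G`: the number of 3-element vertex subsets that are
pairwise adjacent in `G`. -/
noncomputable def triangleCount {V : Type*} (G : SimpleGraph V) : ℕ :=
  Nat.card {s : Finset V // G.IsNClique 3 s}

/-- Erdős–Simonovits supersaturation for triangles: for every `γ > 0` there is `δ > 0`
such that every graph on `n` vertices with at least `(1/4 + γ) n^2` edges contains at
least `δ n^3` triangles. -/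
theorem supersaturation :
    ∀ γ : ℝ, 0 < γ → ∃ δ : ℝ, 0 < δ ∧
      ∀ (n : ℕ) (G : SimpleGraph (Fin n)),
        (1 / 4 + γ) * (n : ℝ) ^ 2 ≤ (Nat.card G.edgeSet : ℝ) →
        δ * (n : ℝ) ^ 3 ≤ (triangleCount G : ℝ) := by
  intro γ hγ
  set ε : ℝ := min γ 1 with hε_def
  have hε : 0 < ε := lt_min hγ one_pos
  have hε1 : ε ≤ 1 := min_le_right _ _
  have hεγ : ε ≤ γ := min_le_left _ _
  refine ⟨SimpleGraph.triangleRemovalBound ε, SimpleGraph.triangleRemovalBound_pos hε, ?_⟩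
  intro n G hG
  classical
  rcases Nat.eq_zero_or_pos n with hn0 | hn0
  · subst hn0
    simp only [Nat.cast_zero]
    norm_num
  haveI : Nonempty (Fin n) := ⟨⟨0, hn0⟩⟩
  -- number of edges of G as a Finset card
  have hedge : (Nat.card G.edgeSet : ℝ) = (#G.edgeFinset : ℝ) := by
    rw [Nat.card_eq_fintype_card, SimpleGraph.edgeFinset_card]
  rw [hedge] at hG
  -- G is ε-far from triangle-free
  have hfar : G.FarFromTriangleFree ε := by
    rw [SimpleGraph.farFromTriangleFree_iff]
    intro H _ hHG hH3
    have hm : (#H.edgeFinset : ℝ) ≤ (Fintype.card (Fin n) : ℝ) ^ 2 / 4 := mantel_real hH3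
    rw [Fintype.card_fin] at hm ⊢
    push_cast
    have hn2 : (0 : ℝ) ≤ (n : ℝ) ^ 2 := by positivity
    nlinarith [hG, hm, mul_le_mul_of_nonneg_right hεγ hn2]
  have hcount := hfar.le_card_cliqueFinset
  rw [Fintype.card_fin] at hcount
  -- identify triangleCount with the clique finset cardinality
  have htri : (triangleCount G : ℝ) = (#(G.cliqueFinset 3) : ℝ) := by
    congr 1
    rw [triangleCount, Nat.card_eq_fintype_card, Fintype.card_subtype]
    apply Finset.card_bij (fun s _ => s) <;>
      simp +contextual [SimpleGraph.mem_cliqueFinset_iff]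
  rw [htri]
  exact_mod_cast hcount
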